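/- Assume λ < 0 and μ > 0. Then φ(π/μ, P⁺, u⁻) = P⁻ and φ(π/μ, P⁻, u⁺) = P⁺. Consequently, the curve x defined on [0, 2π/μ] by x(s) = φ(s, P⁺, u⁻) for s ∈ [0, π/μ] and x(s) = φ(s − π/μ, P⁻, u⁺) for s ∈ [π/μ, 2π/μ], extended (2π/μ)-periodically to ℝ, is a periodic trajectory of the system whose image is the set O := {φ(s, P⁺, u⁻) : s ∈ [0, π/μ]} ∪ {φ(s, P⁻, u⁺) : s ∈ [0, π/μ]}. -/

import Mathlib

noncomputable section

open Real Set RealInnerProductSpace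

/-- The Euclidean plane. -/
abbrev E2 : Type := EuclideanSpace ℝ (Fin 2)

/-- The vector `(a, b)` in the Euclidean plane. -/
def vec2 (a b : ℝ) : E2 := WithLp.toLp 2 ![a, b]

/-- Counterclockwise rotation of angle `φ`. -/
def rotMap (φ : ℝ) (v : E2) : E2 :=
  vec2 (Real.cos φ * v 0 - Real.sin φ * v 1) (Real.sin φ * v 0 + Real.cos φ * v 1)

/-- `θ`, the counterclockwise rotation by `π/2`. -/
def thetaMap (v : E2) : E2 := vec2 (-(v 1)) (v 0)

/-- The linear map with matrix `A = ((l, -m), (m, l))`. -/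
def Amap (l m : ℝ) (v : E2) : E2 := vec2 (l * v 0 - m * v 1) (m * v 0 + l * v 1)

/-- The inverse `A⁻¹` of the matrix `A = ((l, -m), (m, l))` (with `det A = l² + m² ≠ 0`). -/
def AinvMap (l m : ℝ) (v : E2) : E2 :=
  (1 / (l ^ 2 + m ^ 2)) • vec2 (l * v 0 + m * v 1) (-m * v 0 + l * v 1)

/-- The matrix exponential `e^{τA} = e^{τl} R_{τm}` for `A = ((l, -m), (m, l))`. -/
def expA (l m τ : ℝ) (v : E2) : E2 := Real.exp (τ * l) • rotMap (τ * m) v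

/-- The equilibrium `v(u) = -u A⁻¹ η`. -/
def equil (l m : ℝ) (η : E2) (u : ℝ) : E2 := (-u) • AinvMap l m η

/-- The solution `φ(s, v, u) = e^{sA}(v - v(u)) + v(u)` of `ẋ = Ax + uη` for constant control. -/
def phi (l m : ℝ) (η : E2) (s : ℝ) (v : E2) (u : ℝ) : E2 :=
  expA l m s (v - equil l m η u) + equil l m η u

/-- The spiral `φ_A(τ, v₁, v₂) = e^{τA}(v₁ - v₂) + v₂`. -/
def phiA (l m : ℝ) (τ : ℝ) (v₁ v₂ : E2) : E2 := expA l m τ (v₁ - v₂) + v₂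

/-- The region `C_A(v₁, v₂)`. -/
def CA (l m : ℝ) (v₁ v₂ : E2) : Set E2 :=
  {v | 0 ≤ ⟪v - v₂, thetaMap (v₁ - v₂)⟫ ∧
    ∀ τ ∈ Icc (0 : ℝ) (π / m),
      0 ≤ ⟪v - phiA l m τ v₁ v₂, thetaMap (Amap l m (expA l m τ (v₁ - v₂)))⟫}

/-- Concatenated solution associated to a finite list of (time, control) pairs. -/
def trajComp (l m : ℝ) (η : E2) : E2 → List (ℝ × ℝ) → E2
  | v, [] => v
  | v, p :: rest => trajComp l m η (phi l m η p.1 v p.2) rest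

/-- The forward reachable set `R⁺(v)`. -/
def ReachPlus (l m : ℝ) (η : E2) (Ω : Set ℝ) (v : E2) : Set E2 :=
  {w | ∃ L : List (ℝ × ℝ), (∀ p ∈ L, 0 ≤ p.1 ∧ p.2 ∈ Ω) ∧ w = trajComp l m η v L}

/-- The backward reachable set `R⁻(v)` (forward reachable set of the time-reversed system). -/
def ReachMinus (l m : ℝ) (η : E2) (Ω : Set ℝ) (v : E2) : Set E2 :=
  {w | ∃ L : List (ℝ × ℝ), (∀ p ∈ L, p.1 ≤ 0 ∧ p.2 ∈ Ω) ∧ w = trajComp l m η v L}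

/-- An admissible trajectory of the system starting at `v`. -/
def IsAdmissibleTraj (l m : ℝ) (η : E2) (Ω : Set ℝ) (v : E2) (x : ℝ → E2) : Prop :=
  x 0 = v ∧
  ∃ t : ℕ → ℝ, t 0 = 0 ∧ StrictMono t ∧ (∀ M : ℝ, ∃ n, M < t n) ∧
    ∃ u : ℕ → ℝ, (∀ k, u k ∈ Ω) ∧
      ∀ k, ∀ s ∈ Icc (t k) (t (k + 1)), x s = phi l m η (s - t k) (x (t k)) (u k)

/-- An admissible trajectory of the time-reversed system starting at `v`. -/
def IsAdmissibleTrajRev (l m : ℝ) (η : E2) (Ω : Set ℝ) (v : E2) (x : ℝ → E2) : Prop :=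
  x 0 = v ∧
  ∃ t : ℕ → ℝ, t 0 = 0 ∧ StrictMono t ∧ (∀ M : ℝ, ∃ n, M < t n) ∧
    ∃ u : ℕ → ℝ, (∀ k, u k ∈ Ω) ∧
      ∀ k, ∀ s ∈ Icc (t k) (t (k + 1)), x s = phi l m η (-(s - t k)) (x (t k)) (u k)

/-- Conditions (a) and (b) of the definition of a control set. -/
def ControlSetAxioms (l m : ℝ) (η : E2) (Ω : Set ℝ) (D : Set E2) : Prop :=
  (∀ v ∈ D, ∃ x : ℝ → E2, IsAdmissibleTraj l m η Ω v x ∧ ∀ s : ℝ, 0 ≤ s → x s ∈ D) ∧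
  ∀ v ∈ D, D ⊆ closure (ReachPlus l m η Ω v)

/-- A control set: a set satisfying (a) and (b), maximal with respect to set inclusion. -/
def IsControlSet (l m : ℝ) (η : E2) (Ω : Set ℝ) (D : Set E2) : Prop :=
  ControlSetAxioms l m η Ω D ∧
    ∀ D' : Set E2, ControlSetAxioms l m η Ω D' → D ⊆ D' → D' = D

/-- Conditions (a) and (b) of the definition of a control set of the time-reversed system. -/
def ControlSetAxiomsRev (l m : ℝ) (η : E2) (Ω : Set ℝ) (D : Set E2) : Prop :=
  (∀ v ∈ D, ∃ x : ℝ → E2, IsAdmissibleTrajRev l m η Ω v x ∧ ∀ s : ℝ, 0 ≤ s → x s ∈ D) ∧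
  ∀ v ∈ D, D ⊆ closure (ReachMinus l m η Ω v)

/-- A control set of the time-reversed system. -/
def IsControlSetRev (l m : ℝ) (η : E2) (Ω : Set ℝ) (D : Set E2) : Prop :=
  ControlSetAxiomsRev l m η Ω D ∧
    ∀ D' : Set E2, ControlSetAxiomsRev l m η Ω D' → D ⊆ D' → D' = D

/-- `ρ = e^{πλ/μ}`. -/
def rho (l m : ℝ) : ℝ := Real.exp (π * l / m)

/-- The point `P⁺ = ((-u⁺ + ρ u⁻)/(1 - ρ)) A⁻¹ η`. -/
def Pplus (l m : ℝ) (η : E2) (um up : ℝ) : E2 :=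
  ((-up + rho l m * um) / (1 - rho l m)) • AinvMap l m η

/-- The point `P⁻ = ((-u⁻ + ρ u⁺)/(1 - ρ)) A⁻¹ η`. -/
def Pminus (l m : ℝ) (η : E2) (um up : ℝ) : E2 :=
  ((-um + rho l m * up) / (1 - rho l m)) • AinvMap l m η

/-- The region `C = C_A(P⁺, v(u⁻)) ∪ C_A(P⁻, v(u⁺))`. -/
def regionC (l m : ℝ) (η : E2) (um up : ℝ) : Set E2 :=
  CA l m (Pplus l m η um up) (equil l m η um) ∪ CA l m (Pminus l m η um up) (equil l m η up)

/-- The sequence `P₀ = v(u⁺)`, `P_{2n+1} = φ(π/μ, P_{2n}, u⁻)`, `P_{2n+2} = φ(π/μ, P_{2n+1}, u⁺)`. -/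
def Pseq (l m : ℝ) (η : E2) (um up : ℝ) : ℕ → E2
  | 0 => equil l m η up
  | n + 1 => phi l m η (π / m) (Pseq l m η um up n) (if n % 2 = 0 then um else up)

/-- The periodic orbit `O`. -/
def orbitO (l m : ℝ) (η : E2) (um up : ℝ) : Set E2 :=
  (fun s => phi l m η s (Pplus l m η um up) um) '' Icc (0 : ℝ) (π / m) ∪
    (fun s => phi l m η s (Pminus l m η um up) up) '' Icc (0 : ℝ) (π / m)


section Aux

lemma phi_zero' (l m : ℝ) (η : E2) (v : E2) (u : ℝ) : phi l m η 0 v u = v := by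
  ext i
  fin_cases i <;>
    simp [phi, expA, rotMap, vec2, PiLp.add_apply, PiLp.sub_apply, PiLp.smul_apply]

lemma phi_pi' (l m : ℝ) (hm : m ≠ 0) (η : E2) (v : E2) (u : ℝ) :
    phi l m η (π / m) v u = (-(rho l m)) • v + (1 + rho l m) • equil l m η u := by
  have h1 : π / m * m = π := div_mul_cancel₀ π hm
  have h2 : π / m * l = π * l / m := by ring
  ext i
  fin_cases i <;>
    simp [phi, expA, rotMap, vec2, rho, h1, h2, PiLp.add_apply, PiLp.sub_apply,
      PiLp.smul_apply] <;> ring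

lemma rho_lt_one' (l m : ℝ) (hl : l < 0) (hm : 0 < m) : rho l m < 1 := by
  have : π * l / m < 0 := div_neg_of_neg_of_pos (mul_neg_of_pos_of_neg pi_pos hl) hm
  simpa [rho] using Real.exp_lt_one_iff.mpr this

lemma part1' (l m : ℝ) (hl : l < 0) (hm : 0 < m) (η : E2) (um up : ℝ) :
    phi l m η (π / m) (Pplus l m η um up) um = Pminus l m η um up := by
  have hρ : (1 : ℝ) - rho l m ≠ 0 := by
    have := rho_lt_one' l m hl hm; linarith
  rw [phi_pi' l m hm.ne' η _ um]
  unfold Pplus Pminus equil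
  rw [smul_smul, smul_smul, ← add_smul]
  congr 1
  field_simp
  ring

lemma part2' (l m : ℝ) (hl : l < 0) (hm : 0 < m) (η : E2) (um up : ℝ) :
    phi l m η (π / m) (Pminus l m η um up) up = Pplus l m η um up := by
  have hρ : (1 : ℝ) - rho l m ≠ 0 := by
    have := rho_lt_one' l m hl hm; linarith
  rw [phi_pi' l m hm.ne' η _ up]
  unfold Pplus Pminus equil
  rw [smul_smul, smul_smul, ← add_smul]
  congr 1
  field_simp
  ring

end Aux

/-- `φ(π/μ, P⁺, u⁻) = P⁻`, `φ(π/μ, P⁻, u⁺) = P⁺`, and the corresponding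
`(2π/μ)`-periodic curve is a periodic trajectory of the system whose image is `O`. -/
theorem stmt6 (l m : ℝ) (hl : l < 0) (hm : 0 < m) (η : E2) (hη : η ≠ 0)
    (um up : ℝ) (hu : um < up) :
    phi l m η (π / m) (Pplus l m η um up) um = Pminus l m η um up ∧
    phi l m η (π / m) (Pminus l m η um up) up = Pplus l m η um up ∧
    ∃ x : ℝ → E2,
      IsAdmissibleTraj l m η (Icc um up) (Pplus l m η um up) x ∧
      Function.Periodic x (2 * π / m) ∧
      (∀ s ∈ Icc (0 : ℝ) (π / m), x s = phi l m η s (Pplus l m η um up) um) ∧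
      (∀ s ∈ Icc (π / m) (2 * π / m), x s = phi l m η (s - π / m) (Pminus l m η um up) up) ∧
      x '' Ici (0 : ℝ) = orbitO l m η um up := by
  have hT : 0 < π / m := div_pos pi_pos hm
  set T : ℝ := π / m with hTdef
  set P : E2 := Pplus l m η um up with hP
  set Q : E2 := Pminus l m η um up with hQ
  have h1 : phi l m η T P um = Q := part1' l m hl hm η um up
  have h2 : phi l m η T Q up = P := part2' l m hl hm η um up
  refine ⟨h1, h2, ?_⟩
  have h2T : 0 < 2 * T := by linarith
  set R : ℝ → ℝ := fun s => 2 * T * Int.fract (s / (2 * T)) with hRdef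
  have hR0 : ∀ s, 0 ≤ R s := fun s => mul_nonneg h2T.le (Int.fract_nonneg _)
  have hR1 : ∀ s, R s < 2 * T := fun s => by
    have := Int.fract_lt_one (s / (2 * T))
    calc R s < 2 * T * 1 := mul_lt_mul_of_pos_left this h2T
      _ = 2 * T := mul_one _
  set x : ℝ → E2 := fun s =>
    if R s ≤ T then phi l m η (R s) P um else phi l m η (R s - T) Q up with hxdef
  have hRper : ∀ s, R (s + 2 * T) = R s := by
    intro s
    have : (s + 2 * T) / (2 * T) = s / (2 * T) + 1 := by field_simp
    simp only [hRdef, this, Int.fract_add_one]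
  have hper : Function.Periodic x (2 * T) := by
    intro s
    simp only [hxdef, hRper s]
  have hspec1 : ∀ s ∈ Icc (0 : ℝ) T, x s = phi l m η s P um := by
    intro s hs
    have hfr : Int.fract (s / (2 * T)) = s / (2 * T) := by
      refine Int.fract_eq_self.mpr ⟨div_nonneg hs.1 h2T.le, ?_⟩
      rw [div_lt_one h2T]; linarith [hs.2]
    have hRs : R s = s := by
      simp only [hRdef, hfr]; field_simp
    simp only [hxdef, hRs, if_pos hs.2]
  have hspec2 : ∀ s ∈ Icc T (2 * T), x s = phi l m η (s - T) Q up := by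
    intro s hs
    rcases eq_or_lt_of_le hs.2 with h2e | h2lt
    · subst h2e
      have hR2 : R (2 * T) = 0 := by
        simp only [hRdef]
        rw [div_self h2T.ne']
        simp
      simp only [hxdef, hR2, if_pos hT.le, phi_zero']
      rw [show 2 * T - T = T by ring, h2]
    · have hfr : Int.fract (s / (2 * T)) = s / (2 * T) := by
        refine Int.fract_eq_self.mpr ⟨div_nonneg (le_trans hT.le hs.1) h2T.le, ?_⟩
        rw [div_lt_one h2T]; exact h2lt
      have hRs : R s = s := by
        simp only [hRdef, hfr]; field_simp
      rcases eq_or_lt_of_le hs.1 with h1e | h1lt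
      · subst h1e
        simp only [hxdef, hRs, if_pos le_rfl, h1, sub_self, phi_zero']
      · simp only [hxdef, hRs, if_neg (not_le.mpr h1lt)]
  have hx0 : x 0 = P := by
    rw [hspec1 0 ⟨le_rfl, hT.le⟩, phi_zero']
  have hxT : x T = Q := by
    rw [hspec1 T ⟨hT.le, le_rfl⟩, h1]
  have hshift : ∀ (j : ℕ) (s : ℝ), x (s + j * (2 * T)) = x s := fun j s =>
    (hper.nat_mul j) s
  refine ⟨x, ⟨hx0, ?_⟩, ?_, ?_, ?_, ?_⟩
  · refine ⟨fun k => k * T, by simp, ?_, ?_, fun k => if k % 2 = 0 then um else up,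
      ?_, ?_⟩
    · intro a b hab
      exact mul_lt_mul_of_pos_right (by exact_mod_cast hab) hT
    · intro M
      obtain ⟨n, hn⟩ := exists_nat_gt (M / T)
      exact ⟨n, (div_lt_iff₀ hT).mp hn⟩
    · intro k
      by_cases h : k % 2 = 0 <;> simp [h, le_of_lt hu]
    · intro k s hs
      simp only [Set.mem_Icc] at hs
      obtain ⟨hlo, hhi⟩ := hs
      push_cast at hhi
      show x s = phi l m η (s - (k : ℝ) * T) (x ((k : ℝ) * T))
        (if k % 2 = 0 then um else up)
      rcases Nat.even_or_odd k with ⟨j, hj⟩ | ⟨j, hj⟩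
      · have hk0 : k % 2 = 0 := by omega
        have hcast : (k : ℝ) * T = (j : ℝ) * (2 * T) := by
          subst hj; push_cast; ring
        have hs' : s - (j : ℝ) * (2 * T) ∈ Icc (0 : ℝ) T := by
          constructor
          · rw [hcast] at hlo; linarith
          · have hc2 : ((k : ℝ) + 1) * T = (j : ℝ) * (2 * T) + T := by
              subst hj; push_cast; ring
            rw [hc2] at hhi; linarith
        have hsh := hshift j (s - (j : ℝ) * (2 * T))
        rw [sub_add_cancel] at hsh
        have hxs : x s = phi l m η (s - (j : ℝ) * (2 * T)) P um := by
          rw [hsh]; exact hspec1 _ hs'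
        have hxtk : x ((k : ℝ) * T) = P := by
          rw [hcast, ← zero_add ((j : ℝ) * (2 * T)), hshift j 0, hx0]
        rw [if_pos hk0, hxtk, hxs, hcast]
      · have hk1 : ¬ k % 2 = 0 := by omega
        have hcast : (k : ℝ) * T = (j : ℝ) * (2 * T) + T := by
          subst hj; push_cast; ring
        have hs' : s - (j : ℝ) * (2 * T) ∈ Icc T (2 * T) := by
          constructor
          · rw [hcast] at hlo; linarith
          · have hc2 : ((k : ℝ) + 1) * T = (j : ℝ) * (2 * T) + 2 * T := by
              subst hj; push_cast; ring
            rw [hc2] at hhi; linarith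
        have hsh := hshift j (s - (j : ℝ) * (2 * T))
        rw [sub_add_cancel] at hsh
        have hxs : x s = phi l m η (s - (j : ℝ) * (2 * T) - T) Q up := by
          rw [hsh]; exact hspec2 _ hs'
        have hxtk : x ((k : ℝ) * T) = Q := by
          rw [hcast, add_comm ((j : ℝ) * (2 * T)) T, hshift j T, hxT]
        rw [if_neg hk1, hxtk, hxs, hcast, sub_sub]
  · have h22 : 2 * π / m = 2 * T := by rw [hTdef]; ring
    rw [h22]
    exact hper
  · exact hspec1
  · intro s hs
    have hIcc : Icc (π / m) (2 * π / m) = Icc T (2 * T) := by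
      rw [hTdef]; congr 1; ring
    rw [hIcc] at hs
    exact hspec2 s hs
  · ext w
    constructor
    · rintro ⟨s, -, rfl⟩
      by_cases hc : R s ≤ T
      · exact Or.inl ⟨R s, ⟨hR0 s, hc⟩, by simp only [hxdef, if_pos hc]; rfl⟩
      · refine Or.inr ⟨R s - T, ⟨by linarith [not_le.mp hc], by linarith [hR1 s]⟩, ?_⟩
        simp only [hxdef, if_neg hc]
        rfl
    · rintro (⟨σ, hσ, rfl⟩ | ⟨σ, hσ, rfl⟩)
      · exact ⟨σ, hσ.1, hspec1 σ hσ⟩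
      · refine ⟨σ + T, by simp only [Set.mem_Ici]; linarith [hσ.1, hT], ?_⟩
        rw [hspec2 (σ + T) ⟨by linarith [hσ.1], by linarith [hσ.2]⟩]
        simp
        rfl
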